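/- The region 𝓡 = {(a,b) : a² ≤ b ≤ 1, 0 ≤ a ≤ 1} is negatively invariant for the flow of F(a,b) = (a(1 − a²/b), (α/(νn))(c_ν b − 1 − ((n+1)/α)ν a²)): on the boundary segment {b = 1, 0 < a < 1} both components of F are strictly positive (so the forward flow exits through it), on the boundary curve {b = a², 0 < a < 1} the first component of F vanishes and the second is strictly negative, and on the segment {a = 0, 1/c_ν < b ≤ 1} the flow is tangent. Moreover, in the interior of 𝓡 the first component of F is strictly positive, so 𝓡 contains no periodic orbit of F. -/

import Mathlib

open Filter Set Real

lemma aux_neg_deriv {f : ℝ → ℝ} {t d : ℝ} (hf : HasDerivAt f d t) (hd : d < 0) :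
    ∃ s, t < s ∧ f s < f t := by
  have h1 := hasDerivAt_iff_tendsto_slope.mp hf
  have h2 : ∀ᶠ s in nhdsWithin t {t}ᶜ, slope f t s < 0 := h1.eventually_lt_const hd
  have h3 : nhdsWithin t (Set.Ioi t) ≤ nhdsWithin t {t}ᶜ :=
    nhdsWithin_mono _ (fun s hs => ne_of_gt hs)
  obtain ⟨s, hs1, hs2⟩ := (((h2.filter_mono h3).and self_mem_nhdsWithin).exists)
  refine ⟨s, hs2, ?_⟩
  have : (f s - f t) / (s - t) < 0 := by simpa [slope_def_field, div_eq_iff] using hs1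
  have hst : 0 < s - t := sub_pos.mpr hs2
  have h4 : f s - f t < 0 := by
    have h5 := mul_neg_of_neg_of_pos this hst
    rwa [div_mul_cancel₀ _ hst.ne'] at h5
  linarith

set_option maxHeartbeats 1000000 in
theorem stmt_19 (α n ν : ℝ) (hα : 0 < α) (hn : 0 < n) (hν : 0 < ν)
    (c : ℝ) (hc : c = 1 + ν * (n + 1) / α)
    (F : ℝ × ℝ → ℝ × ℝ)
    (hF : ∀ p : ℝ × ℝ, F p
      = (p.1 * (1 - p.1 ^ 2 / p.2),
         (α / (ν * n)) * (c * p.2 - 1 - ((n + 1) / α) * ν * p.1 ^ 2))) :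
    (∀ a : ℝ, 0 < a → a < 1 → 0 < (F (a, 1)).1 ∧ 0 < (F (a, 1)).2) ∧
    (∀ a : ℝ, 0 < a → a < 1 → (F (a, a ^ 2)).1 = 0 ∧ (F (a, a ^ 2)).2 < 0) ∧
    (∀ b : ℝ, 1 / c < b → b ≤ 1 → (F (0, b)).1 = 0) ∧
    (∀ a b : ℝ, 0 < a → a < 1 → a ^ 2 < b → b < 1 → 0 < (F (a, b)).1) ∧
    (∀ (γ : ℝ → ℝ × ℝ) (T : ℝ), 0 < T →
      (∀ t : ℝ, HasDerivAt γ (F (γ t)) t) →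
      (∀ t : ℝ, (γ t).1 ^ 2 ≤ (γ t).2 ∧ (γ t).2 ≤ 1 ∧ 0 ≤ (γ t).1 ∧ (γ t).1 ≤ 1) →
      γ T = γ 0 → ∀ t : ℝ, γ t = γ 0) := by
  have hk : 0 < α / (ν * n) := div_pos hα (mul_pos hν hn)
  have hcpos : 0 < c := by rw [hc]; positivity
  refine ⟨?_, ?_, ?_, ?_, ?_⟩
  · -- boundary b = 1
    intro a ha0 ha1
    rw [hF]
    have ha2 : a ^ 2 < 1 := by nlinarith
    constructor
    · show 0 < a * (1 - a ^ 2 / 1)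
      rw [div_one]; nlinarith
    · show 0 < α / (ν * n) * (c * 1 - 1 - (n + 1) / α * ν * a ^ 2)
      have h1 : 0 < c * 1 - 1 - (n + 1) / α * ν * a ^ 2 := by
        rw [hc]
        have h2 : 0 < ν * (n + 1) / α := by positivity
        have h3 : (n + 1) / α * ν = ν * (n + 1) / α := by ring
        rw [h3]; nlinarith
      exact mul_pos hk h1
  · -- boundary b = a²
    intro a ha0 ha1
    rw [hF]
    constructor
    · show a * (1 - a ^ 2 / a ^ 2) = 0
      rw [div_self (pow_ne_zero 2 ha0.ne')]; ring
    · show α / (ν * n) * (c * a ^ 2 - 1 - (n + 1) / α * ν * a ^ 2) < 0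
      have h1 : c * a ^ 2 - 1 - (n + 1) / α * ν * a ^ 2 = a ^ 2 - 1 := by
        rw [hc]; field_simp; ring
      rw [h1]
      have : a ^ 2 < 1 := by nlinarith
      exact mul_neg_of_pos_of_neg hk (by linarith)
  · -- boundary a = 0
    intro b _ _
    rw [hF]
    show (0:ℝ) * (1 - 0 ^ 2 / b) = 0
    ring
  · -- interior
    intro a b ha0 ha1 hab hb1
    rw [hF]
    show 0 < a * (1 - a ^ 2 / b)
    have hb0 : 0 < b := lt_trans (by positivity) hab
    have : a ^ 2 / b < 1 := (div_lt_one hb0).mpr hab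
    nlinarith
  · -- no periodic orbits
    intro γ T hT hderiv hmem hper
    set k := α / (ν * n) with hkdef
    set x : ℝ → ℝ := fun t => (γ t).1 with hxdef
    set y : ℝ → ℝ := fun t => (γ t).2 with hydef
    have hx0 : ∀ t, 0 ≤ x t := fun t => (hmem t).2.2.1
    have hx1 : ∀ t, x t ≤ 1 := fun t => (hmem t).2.2.2
    have hxy : ∀ t, x t ^ 2 ≤ y t := fun t => (hmem t).1
    have hy1 : ∀ t, y t ≤ 1 := fun t => (hmem t).2.1
    have hdx : ∀ t, HasDerivAt x (x t * (1 - x t ^ 2 / y t)) t := by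
      intro t
      have h1 : HasDerivAt x (F (γ t)).1 t := by
        simpa using ((hderiv t).hasFDerivAt.fst).hasDerivAt
      rwa [hF] at h1
    have hdy : ∀ t, HasDerivAt y (k * (c * y t - 1 - (n + 1) / α * ν * x t ^ 2)) t := by
      intro t
      have h1 : HasDerivAt y (F (γ t)).2 t := by
        simpa using ((hderiv t).hasFDerivAt.snd).hasDerivAt
      rwa [hF] at h1
    -- y is everywhere positive
    have hypos : ∀ t, 0 < y t := by
      intro t
      rcases lt_or_eq_of_le (le_trans (sq_nonneg (x t)) (hxy t)) with h | h
      · exact h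
      have hyt : y t = 0 := h.symm
      have hxt : x t = 0 := by nlinarith [hxy t, sq_nonneg (x t), hx0 t]
      have hd : HasDerivAt y (-k) t := by
        have := hdy t
        rw [hyt, hxt] at this
        convert this using 1; ring
      obtain ⟨s, _, hs⟩ := aux_neg_deriv hd (neg_neg_iff_pos.mpr hk)
      have := le_trans (sq_nonneg (x s)) (hxy s)
      rw [hyt] at hs; linarith
    -- x is nondecreasing
    have hxdiff : Differentiable ℝ x := fun t => (hdx t).differentiableAt
    have hxmono : Monotone x := by
      apply monotone_of_deriv_nonneg hxdiff
      intro t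
      rw [(hdx t).deriv]
      have h1 : x t ^ 2 / y t ≤ 1 := (div_le_one (hypos t)).mpr (hxy t)
      have := hx0 t
      nlinarith
    have hxT : x T = x 0 := congrArg Prod.fst hper
    have hyT : y T = y 0 := congrArg Prod.snd hper
    have hxconst : ∀ t ∈ Icc (0:ℝ) T, x t = x 0 := by
      intro t ht
      exact le_antisymm (hxT ▸ hxmono ht.2) (hxmono ht.1)
    -- derivative of x vanishes inside (0,T)
    have hx'zero : ∀ t ∈ Ioo (0:ℝ) T, x t * (1 - x t ^ 2 / y t) = 0 := by
      intro t ht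
      have h0 : HasDerivAt x 0 t := by
        have hmem' : Ioo (0:ℝ) T ∈ nhds t := Ioo_mem_nhds ht.1 ht.2
        refine (hasDerivAt_const t (x 0)).congr_of_eventuallyEq ?_
        filter_upwards [hmem'] with s hs
        exact hxconst s (Ioo_subset_Icc_self hs)
      exact ((hdx t).unique h0)
    rcases (lt_or_eq_of_le (hx0 0)) with ha | ha
    · -- Case B : x 0 > 0
      have ht₀ : (T/2) ∈ Ioo (0:ℝ) T := ⟨by linarith, by linarith⟩
      have hyc : ∀ t ∈ Ioo (0:ℝ) T, y t = x 0 ^ 2 := by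
        intro t ht
        have h1 := hx'zero t ht
        rw [hxconst t (Ioo_subset_Icc_self ht)] at h1
        have h2 : 1 - x 0 ^ 2 / y t = 0 := by
          rcases mul_eq_zero.mp h1 with h | h
          · exact absurd h ha.ne'
          · exact h
        have h3 : x 0 ^ 2 / y t = 1 := by linarith
        have := hypos t
        field_simp at h3
        linarith
      have hy'zero : k * (c * y (T/2) - 1 - (n + 1) / α * ν * x (T/2) ^ 2) = 0 := by
        have h0 : HasDerivAt y 0 (T/2) := by
          have hmem' : Ioo (0:ℝ) T ∈ nhds (T/2) := Ioo_mem_nhds ht₀.1 ht₀.2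
          refine (hasDerivAt_const (T/2) (x 0 ^ 2)).congr_of_eventuallyEq ?_
          filter_upwards [hmem'] with s hs
          exact hyc s hs
        exact (hdy (T/2)).unique h0
      have hx0eq : x 0 = 1 := by
        rw [hyc (T/2) ht₀, hxconst (T/2) (Ioo_subset_Icc_self ht₀)] at hy'zero
        have h1 : c * x 0 ^ 2 - 1 - (n + 1) / α * ν * x 0 ^ 2 = x 0 ^ 2 - 1 := by
          rw [hc]; field_simp; ring
        rw [h1] at hy'zero
        have h2 : x 0 ^ 2 - 1 = 0 := by
          rcases mul_eq_zero.mp hy'zero with h | h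
          · exact absurd h hk.ne'
          · exact h
        nlinarith [hx1 0]
      -- x ≡ 1 everywhere, using monotonicity of (1-x)·exp(2t)
      have hxall : ∀ t, x t = 1 := by
        have hf : ∀ t, HasDerivAt (fun s => (1 - x s) * Real.exp (2 * s))
            ((0 - x t * (1 - x t ^ 2 / y t)) * Real.exp (2 * t)
              + (1 - x t) * (Real.exp (2 * t) * 2)) t := by
          intro t
          have he : HasDerivAt (fun s : ℝ => Real.exp (2 * s)) (Real.exp (2 * t) * 2) t := by
            simpa [Function.comp_def] using (Real.hasDerivAt_exp (2 * t)).comp t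
              ((hasDerivAt_id t).const_mul 2)
          exact ((hasDerivAt_const t (1:ℝ)).sub (hdx t)).mul he
        have hfmono : Monotone (fun s => (1 - x s) * Real.exp (2 * s)) := by
          apply monotone_of_deriv_nonneg (fun t => (hf t).differentiableAt)
          intro t
          rw [(hf t).deriv]
          have h1 : x t ^ 2 ≤ x t ^ 2 / y t := by
            rw [le_div_iff₀ (hypos t)]
            nlinarith [sq_nonneg (x t), hy1 t]
          have h2 : x t * (1 - x t ^ 2 / y t) ≤ 2 * (1 - x t) := by
            have e1 : 0 ≤ x t * (x t ^ 2 / y t - x t ^ 2) :=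
              mul_nonneg (hx0 t) (by linarith)
            have e2 : 0 ≤ (1 - x t) * (2 - x t * (1 + x t)) :=
              mul_nonneg (by linarith [hx1 t]) (by nlinarith [hx0 t, hx1 t])
            nlinarith [e1, e2]
          have h3 : (0:ℝ) < Real.exp (2 * t) := Real.exp_pos _
          nlinarith
        intro t
        rcases le_or_gt t 0 with h | h
        · have h1 : (1 - x t) * Real.exp (2 * t) ≤ (1 - x 0) * Real.exp (2 * 0) := hfmono h
          have h2 : (1 - x 0) * Real.exp (2 * 0) = 0 := by rw [hx0eq]; ring
          rw [h2] at h1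
          have h3 : (0:ℝ) < Real.exp (2 * t) := Real.exp_pos _
          have h4 : 1 - x t ≤ 0 := by
            by_contra h5
            push_neg at h5
            nlinarith
          linarith [hx1 t]
        · have h1 : (1:ℝ) ≤ x t := hx0eq ▸ hxmono h.le
          linarith [hx1 t]
      have hyall : ∀ t, y t = 1 := by
        intro t
        have := hxy t
        rw [hxall t] at this
        have := hy1 t
        linarith [hxy t, (by rw [hxall t]; norm_num : (1:ℝ) ≤ x t ^ 2)]
      intro t
      have : (γ t).1 = (γ 0).1 ∧ (γ t).2 = (γ 0).2 := by
        constructor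
        · show x t = x 0
          rw [hxall t, hxall 0]
        · show y t = y 0
          rw [hyall t, hyall 0]
      exact Prod.ext_iff.mpr this
    · -- Case A : x 0 = 0
      have ha0 : x 0 = 0 := ha.symm
      have hxall : ∀ t, x t = 0 := by
        have hf : ∀ t, HasDerivAt (fun s => x s * Real.exp (-s))
            ((x t * (1 - x t ^ 2 / y t)) * Real.exp (-t) + x t * (-Real.exp (-t))) t := by
          intro t
          have he : HasDerivAt (fun s : ℝ => Real.exp (-s)) (-Real.exp (-t)) t := by
            simpa [Function.comp_def] using (Real.hasDerivAt_exp (-t)).comp t (hasDerivAt_neg t)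
          exact (hdx t).mul he
        have hfanti : Antitone (fun s => x s * Real.exp (-s)) := by
          apply antitone_of_deriv_nonpos (fun t => (hf t).differentiableAt)
          intro t
          rw [(hf t).deriv]
          have h1 : 0 ≤ x t ^ 2 / y t := div_nonneg (sq_nonneg _) (hypos t).le
          have h3 : (0:ℝ) < Real.exp (-t) := Real.exp_pos _
          nlinarith [mul_nonneg (mul_nonneg (hx0 t) h1) h3.le]
        intro t
        rcases le_or_gt t 0 with h | h
        · exact le_antisymm (ha0 ▸ hxmono h) (hx0 t)
        · have h1 : x t * Real.exp (-t) ≤ x 0 * Real.exp (-(0:ℝ)) := hfanti h.le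
          have h2 : x 0 * Real.exp (-(0:ℝ)) = 0 := by rw [ha0]; ring
          rw [h2] at h1
          have h3 : (0:ℝ) < Real.exp (-t) := Real.exp_pos _
          have := hx0 t
          nlinarith
      -- now y solves y' = k (c y - 1)
      have hdy2 : ∀ t, HasDerivAt y (k * (c * y t - 1)) t := by
        intro t
        have := hdy t
        rw [hxall t] at this
        convert this using 1; ring
      have hw : ∀ t, HasDerivAt (fun s => (y s - 1/c) * Real.exp (-(k * c * s))) 0 t := by
        intro t
        have he : HasDerivAt (fun s : ℝ => Real.exp (-(k * c * s)))
            (Real.exp (-(k * c * t)) * (-(k * c))) t := by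
          simpa [Function.comp_def] using (Real.hasDerivAt_exp (-(k * c * t))).comp t
            (((hasDerivAt_id t).const_mul (k * c)).neg)
        have h1 := ((hdy2 t).sub_const (1/c)).mul he
        refine h1.congr_deriv ?_
        have hc1 : 1 / c * c = 1 := one_div_mul_cancel hcpos.ne'
        linear_combination (k * Real.exp (-(k * c * t))) * hc1
      have hwconst : ∀ s t : ℝ, (y s - 1/c) * Real.exp (-(k * c * s))
          = (y t - 1/c) * Real.exp (-(k * c * t)) := by
        intro s t
        exact is_const_of_deriv_eq_zero (fun u => (hw u).differentiableAt)
          (fun u => (hw u).deriv) s t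
      have hy0 : y 0 = 1/c := by
        have h1 := hwconst T 0
        rw [hyT] at h1
        simp only [mul_zero, neg_zero, Real.exp_zero, mul_one] at h1
        have h2 : Real.exp (-(k * c * T)) < 1 := by
          apply Real.exp_lt_one_iff.mpr
          have : 0 < k * c * T := by positivity
          linarith
        have h3 : 0 < Real.exp (-(k * c * T)) := Real.exp_pos _
        by_contra h4
        rcases lt_or_gt_of_ne h4 with h5 | h5
        · nlinarith
        · nlinarith
      have hyall : ∀ t, y t = 1/c := by
        intro t
        have h1 := hwconst t 0
        rw [hy0] at h1
        simp only [mul_zero, neg_zero, Real.exp_zero, mul_one, sub_self, zero_mul] at h1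
        have h3 : 0 < Real.exp (-(k * c * t)) := Real.exp_pos _
        have h4 : y t - 1/c = 0 := by
          by_contra h5
          exact h5 (by nlinarith [mul_eq_zero.mp h1])
        linarith
      intro t
      have : (γ t).1 = (γ 0).1 ∧ (γ t).2 = (γ 0).2 := by
        constructor
        · show x t = x 0
          rw [hxall t, hxall 0]
        · show y t = y 0
          rw [hyall t, hy0]
      exact Prod.ext_iff.mpr this
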